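/- Let φ : ℝ → ℝ be measurable with φ(x) → ∞ as x → ∞. Then there exists a mean-zero f ∈ L^1 of a standard probability space such that for every ergodic invertible measure-preserving transformation T and every measurable g satisfying f(x) = g(Tx) − g(x) a.e., one has ∫_X φ(|g(x)|) dμ = ∞. -/

import Mathlib

open MeasureTheory Filter Topology Set
open scoped ENNReal NNReal

/-- Double clamp potential: clamp to `[2R, P]` plus clamp to `[-Q, -2R]`. -/
noncomputable def Fclamp (P Q R s : ℝ) : ℝ :=
  min P (max (2*R) s) + min (-(2*R)) (max (-Q) s)

lemma Fclamp_mono (P Q R : ℝ) : Monotone (Fclamp P Q R) := fun a b h =>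
  add_le_add (min_le_min le_rfl (max_le_max le_rfl h))
    (min_le_min le_rfl (max_le_max le_rfl h))

lemma Fclamp_abs_le (P Q R s : ℝ) (hR : 0 ≤ R) (hP : 2*R ≤ P) (hQ : 2*R ≤ Q) :
    |Fclamp P Q R s| ≤ P + Q := by
  have h1 : 2*R ≤ min P (max (2*R) s) := le_min hP (le_max_left _ _)
  have h2 : min P (max (2*R) s) ≤ P := min_le_left _ _
  have h3 : -Q ≤ min (-(2*R)) (max (-Q) s) := le_min (by linarith) (le_max_left _ _)
  have h4 : min (-(2*R)) (max (-Q) s) ≤ -(2*R) := min_le_left _ _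
  rw [abs_le]; unfold Fclamp at *; constructor <;> linarith

lemma Fclamp_hit (P Q R s t : ℝ) (hR : 2 ≤ R) (hP : 2*R ≤ P) (hQ : 2*R ≤ Q)
    (hs1 : -Q ≤ s) (hs2 : s ≤ P - 8*R) (ht : 8*R - 1 ≤ t) :
    Fclamp P Q R s + 3*R ≤ Fclamp P Q R (s + t) := by
  have h1 : Fclamp P Q R (s + (8*R - 1)) ≤ Fclamp P Q R (s + t) :=
    Fclamp_mono P Q R (by linarith)
  refine le_trans ?_ h1
  unfold Fclamp
  simp only [min_def, max_def]
  split_ifs <;> linarith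

lemma Fclamp_drop (P Q R s t : ℝ) (ht : -1 ≤ t) :
    Fclamp P Q R s - 2 ≤ Fclamp P Q R (s + t) := by
  rcases le_total t 0 with h | h
  · have h1 : Fclamp P Q R (s + t) ≥ Fclamp P Q R (s + (-1)) :=
      Fclamp_mono P Q R (by linarith)
    refine le_trans ?_ h1
    unfold Fclamp
    simp only [min_def, max_def]
    split_ifs <;> linarith
  · have h1 : Fclamp P Q R s ≤ Fclamp P Q R (s + t) := Fclamp_mono P Q R (by linarith)
    linarith

lemma Fclamp_flat (P Q R s t : ℝ) (hR : 2 ≤ R) (hP : 2*R ≤ P) (hQ : 2*R ≤ Q)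
    (hs : |s| ≤ R) (ht : -1 ≤ t) :
    Fclamp P Q R s ≤ Fclamp P Q R (s + t) := by
  rcases le_total t 0 with h | h
  · rw [abs_le] at hs
    have h1 : Fclamp P Q R (s + t) ≥ Fclamp P Q R (s + (-1)) :=
      Fclamp_mono P Q R (by linarith)
    refine le_trans ?_ h1
    unfold Fclamp
    simp only [min_def, max_def]
    split_ifs <;> linarith
  · exact Fclamp_mono P Q R (by linarith)

lemma Fclamp_master (P Q R s t : ℝ) (hR : 2 ≤ R) (hP : 2*R ≤ P) (hQ : 2*R ≤ Q)
    (ht : -1 ≤ t) (hit : Prop) [Decidable hit]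
    (hhit : hit → (8*R - 1 ≤ t ∧ -Q ≤ s ∧ s ≤ P - 8*R)) :
    (if hit then 3*R else 0) - (if R < |s| then 2 else 0)
      ≤ Fclamp P Q R (s + t) - Fclamp P Q R s := by
  by_cases h : hit
  · obtain ⟨h1, h2, h3⟩ := hhit h
    have := Fclamp_hit P Q R s t hR hP hQ h2 h3 h1
    simp only [h, if_true]
    split_ifs <;> linarith
  · simp only [h, if_false]
    by_cases h2 : R < |s|
    · have := Fclamp_drop P Q R s t ht
      simp only [h2, if_true]; linarith
    · have := Fclamp_flat P Q R s t hR hP hQ (le_of_not_gt h2) ht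
      simp only [h2, if_false]; linarith


lemma cdf_continuous (ν : Measure ℝ) [IsProbabilityMeasure ν] [NullSingletonClass ν] :
    Continuous (ProbabilityTheory.cdf ν) := by
  set F := ProbabilityTheory.cdf ν
  have hmono : Monotone F := ProbabilityTheory.monotone_cdf ν
  rw [continuous_iff_continuousAt]
  intro x
  rw [hmono.continuousAt_iff_leftLim_eq_rightLim]
  have hr : Function.rightLim F x = F x := by
    rw [← hmono.continuousWithinAt_Ioi_iff_rightLim_eq]
    exact (F.right_continuous x).mono Ioi_subset_Ici_self
  have hl : Function.leftLim F x = F x := by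
    have hsing : F.measure {x} = 0 := by
      rw [ProbabilityTheory.measure_cdf]
      exact measure_singleton x
    rw [StieltjesFunction.measure_singleton] at hsing
    have h1 : Function.leftLim F x ≤ F x := hmono.leftLim_le le_rfl
    have h2 : F x - Function.leftLim F x ≤ 0 := by
      by_contra h
      push_neg at h
      exact (ENNReal.ofReal_pos.2 h).ne' hsing
    linarith
  rw [hl, hr]

lemma exists_disjoint_prescribed {X : Type*} [MeasurableSpace X] [StandardBorelSpace X]
    (μ : Measure X) [IsProbabilityMeasure μ] [NullSingletonClass μ]
    (εr : ℕ → ℝ) (hpos : ∀ m, 0 < εr m)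
    (hsum : ∀ m, ∑ j ∈ Finset.range m, εr j ≤ 1/4) :
    ∃ A : ℕ → Set X, (∀ m, MeasurableSet (A m)) ∧ Pairwise (Function.onFun Disjoint A) ∧
      ∀ m, μ (A m) = ENNReal.ofReal (εr m) := by
  obtain ⟨ι, hι⟩ := MeasureTheory.exists_measurableEmbedding_real X
  set ν : Measure ℝ := μ.map ι with hν
  haveI : IsProbabilityMeasure ν := Measure.isProbabilityMeasure_map hι.measurable.aemeasurable
  haveI : NullSingletonClass ν := by
    constructor
    intro y
    rw [hν, Measure.map_apply hι.measurable (measurableSet_singleton y)]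
    exact Set.Subsingleton.measure_zero (fun a ha b hb => hι.injective (ha.trans hb.symm)) μ
  set F := ProbabilityTheory.cdf ν with hF
  have hcont : Continuous F := cdf_continuous ν
  have hmono : Monotone F := ProbabilityTheory.monotone_cdf ν
  -- cumulative values
  set q : ℕ → ℝ := fun m => 1/2 + ∑ j ∈ Finset.range m, εr j with hq
  have hq01 : ∀ m, 0 < q m ∧ q m < 1 := by
    intro m
    constructor
    · have : (0:ℝ) ≤ ∑ j ∈ Finset.range m, εr j :=
        Finset.sum_nonneg fun j _ => (hpos j).le
      simp only [hq]; linarith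
    · have := hsum m
      simp only [hq]; linarith
  have hqmono : StrictMono q := by
    apply strictMono_nat_of_lt_succ
    intro n
    simp only [hq, Finset.sum_range_succ]
    have := hpos n
    linarith
  -- find points where cdf attains q m
  have hexists : ∀ m, ∃ u : ℝ, F u = q m := by
    intro m
    obtain ⟨h0, h1⟩ := hq01 m
    have ha : ∃ a, F a < q m := by
      have := (ProbabilityTheory.tendsto_cdf_atBot ν).eventually_lt_const h0
      exact this.exists
    have hb : ∃ b, q m < F b := by
      have := (ProbabilityTheory.tendsto_cdf_atTop ν).eventually_const_lt h1
      exact this.exists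
    obtain ⟨a, ha⟩ := ha
    obtain ⟨b, hb⟩ := hb
    have hab : a ≤ max a b := le_max_left _ _
    have hFb : q m < F (max a b) := lt_of_lt_of_le hb (hmono (le_max_right a b))
    have : q m ∈ Icc (F a) (F (max a b)) := ⟨ha.le, hFb.le⟩
    have := intermediate_value_Icc hab hcont.continuousOn this
    obtain ⟨u, _, hu⟩ := this
    exact ⟨u, hu⟩
  choose u hu using hexists
  have humono : StrictMono u := by
    apply strictMono_nat_of_lt_succ
    intro n
    by_contra h
    push_neg at h
    have := hmono h
    rw [hu, hu] at this
    exact absurd this (not_le.2 (hqmono (Nat.lt_succ_self n)))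
  refine ⟨fun m => ι ⁻¹' (Ioc (u m) (u (m+1))), fun m => hι.measurable measurableSet_Ioc, ?_, ?_⟩
  · intro m n hmn
    have : Disjoint (Ioc (u m) (u (m+1))) (Ioc (u n) (u (n+1))) := by
      rw [Set.Ioc_disjoint_Ioc]
      rcases hmn.lt_or_gt with h | h
      · exact le_trans (min_le_left _ _) (le_trans (humono.monotone h) (le_max_right _ _))
      · exact le_trans (min_le_right _ _) (le_trans (humono.monotone h) (le_max_left _ _))
    exact this.preimage ι
  · intro m
    have : μ (ι ⁻¹' (Ioc (u m) (u (m+1)))) = ν (Ioc (u m) (u (m+1))) :=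
      (Measure.map_apply hι.measurable measurableSet_Ioc).symm
    rw [this, ← ProbabilityTheory.measure_cdf ν, StieltjesFunction.measure_Ioc, hu, hu]
    congr 1
    simp [hq, Finset.sum_range_succ]

lemma key_bound {X : Type*} [MeasurableSpace X] (μ : Measure X) [IsProbabilityMeasure μ]
    (T : X → X) (hTm : MeasurePreserving T μ μ) (hemb : MeasurableEmbedding T)
    (g f : X → ℝ) (hgm : Measurable g)
    (A : Set X) (hA : MeasurableSet A) (R : ℝ) (hR : 2 ≤ R)
    (hflb : ∀ x, -1 ≤ f x) (hfA : ∀ x ∈ A, f x = 8*R - 1)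
    (hfg : ∀ᵐ x ∂μ, f x = g (T x) - g x) :
    μ A ≤ ENNReal.ofReal (2/(3*R) * (μ {x | R < |g x|}).toReal) := by
  classical
  set E : Set X := {x | R < |g x|} with hEdef
  have hE : MeasurableSet E := measurableSet_lt measurable_const hgm.abs
  set W : ℕ → Set X := fun k => A ∩ g ⁻¹' (Icc (-(k:ℝ)) ((k:ℝ) - 8*R)) with hWdef
  have hWmeas : ∀ k, MeasurableSet (W k) := fun k => hA.inter (hgm measurableSet_Icc)
  -- Step 1 : for every large k, a bound on μ (W k)
  have step1 : ∀ k : ℕ, 8*R ≤ (k:ℝ) →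
      μ (W k) ≤ ENNReal.ofReal (2/(3*R) * (μ E).toReal) := by
    intro k hk
    have hR0 : (0:ℝ) ≤ R := by linarith
    have hP : 2*R ≤ (k:ℝ) := by linarith
    set u0 : X → ℝ := fun x => Fclamp k k R (g x) with hu0def
    have hFccont : Continuous (Fclamp (k:ℝ) (k:ℝ) R) := by
      unfold Fclamp; fun_prop
    have hu0m : Measurable u0 := hFccont.measurable.comp hgm
    have hu0b : ∀ x, ‖u0 x‖ ≤ (k:ℝ) + k := fun x => Fclamp_abs_le _ _ _ _ hR0 hP hP
    have hu0int : Integrable u0 μ :=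
      Integrable.mono' (integrable_const ((k:ℝ) + k)) hu0m.aestronglyMeasurable
        (ae_of_all _ hu0b)
    have hu0Tint : Integrable (fun x => u0 (T x)) μ :=
      Integrable.mono' (integrable_const ((k:ℝ) + k))
        (hu0m.comp hTm.measurable).aestronglyMeasurable (ae_of_all _ fun x => hu0b (T x))
    have hint_eq : ∫ x, u0 (T x) ∂μ = ∫ x, u0 x ∂μ := hTm.integral_comp hemb u0
    have hpt : ∀ᵐ x ∂μ,
        (W k).indicator (fun _ => 3*R) x - E.indicator (fun _ => (2:ℝ)) x
          ≤ u0 (T x) - u0 x := by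
      filter_upwards [hfg] with x hx
      have hgT : g (T x) = g x + f x := by linarith
      have master := Fclamp_master (k:ℝ) (k:ℝ) R (g x) (f x) hR hP hP (hflb x)
        (x ∈ W k) (fun hw => ⟨(hfA x hw.1).ge, (hw.2 : g x ∈ Icc _ _).1,
          (hw.2 : g x ∈ Icc _ _).2⟩)
      have h1 : (W k).indicator (fun _ => 3*R) x = if x ∈ W k then 3*R else 0 :=
        Set.indicator_apply _ _ _
      have h2 : E.indicator (fun _ => (2:ℝ)) x = if R < |g x| then 2 else 0 := by
        simp [Set.indicator_apply, hEdef, Set.mem_setOf_eq]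
      rw [h1, h2, hu0def]
      simp only [hgT]
      exact master
    have hWint : Integrable ((W k).indicator fun _ => (3*R:ℝ)) μ :=
      (integrable_const _).indicator (hWmeas k)
    have hEint : Integrable (E.indicator fun _ => (2:ℝ)) μ :=
      (integrable_const _).indicator hE
    have hmono := integral_mono_ae (hWint.sub hEint) (hu0Tint.sub hu0int) hpt
    simp only [Pi.sub_apply] at hmono
    rw [integral_sub hWint hEint, integral_sub hu0Tint hu0int, hint_eq, sub_self] at hmono
    rw [integral_indicator_const _ (hWmeas k), integral_indicator_const _ hE] at hmono
    simp only [smul_eq_mul] at hmono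
    have hR3 : (0:ℝ) < 3*R := by linarith
    have hWle : (μ (W k)).toReal ≤ 2/(3*R) * (μ E).toReal := by
      rw [div_mul_eq_mul_div, le_div_iff₀ hR3]
      simp only [measureReal_def] at hmono
      nlinarith [ENNReal.toReal_nonneg (a := μ (W k)), ENNReal.toReal_nonneg (a := μ E)]
    calc μ (W k) = ENNReal.ofReal ((μ (W k)).toReal) :=
          (ENNReal.ofReal_toReal (measure_ne_top μ _)).symm
      _ ≤ ENNReal.ofReal (2/(3*R) * (μ E).toReal) := ENNReal.ofReal_le_ofReal hWle
  -- Step 2 : pass to the limit in k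
  have hWmono : Monotone W := by
    intro k l hkl
    refine inter_subset_inter le_rfl (preimage_mono (Icc_subset_Icc ?_ ?_))
    · exact neg_le_neg (by exact_mod_cast hkl)
    · have : (k:ℝ) ≤ l := by exact_mod_cast hkl
      linarith
  have hWunion : ⋃ k, W k = A := by
    ext x
    simp only [mem_iUnion, hWdef, mem_inter_iff, mem_preimage, mem_Icc]
    constructor
    · rintro ⟨k, hk, _⟩; exact hk
    · intro hx
      obtain ⟨k, hk⟩ := exists_nat_ge (|g x| + 8*R)
      have hna := neg_abs_le (g x)
      have hla := le_abs_self (g x)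
      exact ⟨k, hx, by linarith, by linarith⟩
  have htend := tendsto_measure_iUnion_atTop (μ := μ) hWmono
  rw [hWunion] at htend
  refine le_of_tendsto htend ?_
  filter_upwards [eventually_ge_atTop ⌈8*R⌉₊] with k hk
  exact step1 k (le_trans (Nat.le_ceil _) (by exact_mod_cast hk))


theorem stmt15 {X : Type*} [MeasurableSpace X] [StandardBorelSpace X]
    (μ : Measure X) [IsProbabilityMeasure μ] [NullSingletonClass μ]
    (φ : ℝ → ℝ) (hφm : Measurable φ) (hφ : Tendsto φ atTop atTop) :
    ∃ f : X → ℝ, Measurable f ∧ Integrable f μ ∧ ∫ x, f x ∂μ = 0 ∧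
      ∀ T : X → X, Ergodic T μ →
        (∃ S : X → X, Measurable S ∧ MeasurePreserving S μ μ ∧
          Function.LeftInverse S T ∧ Function.RightInverse S T) →
        ∀ g : X → ℝ, Measurable g →
          (∀ᵐ x ∂μ, f x = g (T x) - g x) →
          ∫⁻ x, ENNReal.ofReal (φ |g x|) ∂μ = ⊤ := by
  classical
  -- thresholds for φ
  have hr : ∀ m : ℕ, ∃ r, ∀ t, r ≤ t → (4:ℝ)^m ≤ φ t := by
    intro m
    have := hφ.eventually_ge_atTop ((4:ℝ)^m)
    rw [eventually_atTop] at this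
    obtain ⟨a, ha⟩ := this
    exact ⟨a, fun t ht => ha t ht⟩
  choose r hrspec using hr
  set R : ℕ → ℝ := fun m => max (r m) 2 with hRdef
  have hR2 : ∀ m, 2 ≤ R m := fun m => le_max_right _ _
  have hrR : ∀ m, r m ≤ R m := fun m => le_max_left _ _
  set H : ℕ → ℝ := fun m => 8 * R m with hHdef
  have hH16 : ∀ m, 16 ≤ H m := fun m => by
    have := hR2 m; simp only [hHdef]; linarith
  have hHpos : ∀ m, 0 < H m := fun m => by linarith [hH16 m]
  set εr : ℕ → ℝ := fun m => (1/2)^(m+1) / H m with hεdef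
  have hεpos : ∀ m, 0 < εr m := fun m =>
    div_pos (pow_pos (by norm_num) _) (hHpos m)
  have hHε : ∀ m, H m * εr m = (1/2)^(m+1) := fun m => by
    show H m * ((1/2)^(m+1) / H m) = _
    rw [mul_div_assoc']; exact mul_div_cancel_left₀ _ (hHpos m).ne'
  have hgeo : ∀ m, ∑ j ∈ Finset.range m, (1/2:ℝ)^(j+1) = 1 - (1/2)^m := by
    intro m
    induction m with
    | zero => simp
    | succ n ih =>
        rw [Finset.sum_range_succ, ih, pow_succ]
        ring
  have hsum4 : ∀ m, ∑ j ∈ Finset.range m, εr j ≤ 1/4 := by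
    intro m
    have h1 : ∑ j ∈ Finset.range m, εr j ≤ ∑ j ∈ Finset.range m, (1/2:ℝ)^(j+1)/16 := by
      apply Finset.sum_le_sum
      intro j _
      have hnum : (0:ℝ) ≤ (1/2:ℝ)^(j+1) := by positivity
      exact div_le_div_of_nonneg_left hnum (by norm_num) (hH16 j)
    have h2 : ∑ j ∈ Finset.range m, (1/2:ℝ)^(j+1)/16
        = (∑ j ∈ Finset.range m, (1/2:ℝ)^(j+1))/16 := by
      rw [Finset.sum_div]
    have h3 : (0:ℝ) ≤ (1/2:ℝ)^m := by positivity
    rw [h2, hgeo m] at h1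
    linarith
  obtain ⟨A, hAmeas, hAdisj, hAμ⟩ := exists_disjoint_prescribed μ εr hεpos hsum4
  -- the function f
  set Gf : X → ℝ≥0∞ := fun x => ∑' n, (A n).indicator (fun _ => ENNReal.ofReal (H n)) x
    with hGdef
  have hGmeas : Measurable Gf :=
    Measurable.ennreal_tsum fun n => measurable_const.indicator (hAmeas n)
  have hGval : ∀ n x, x ∈ A n → Gf x = ENNReal.ofReal (H n) := by
    intro n x hx
    have h0 : ∀ b, b ≠ n → (A b).indicator (fun _ => ENNReal.ofReal (H b)) x = 0 := by
      intro b hb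
      have hdis : Disjoint (A b) (A n) := hAdisj hb
      exact Set.indicator_of_notMem (Set.disjoint_right.1 hdis hx) _
    calc Gf x = ∑' (b : ℕ), (A b).indicator (fun _ => ENNReal.ofReal (H b)) x := rfl
      _ = (A n).indicator (fun _ => ENNReal.ofReal (H n)) x := tsum_eq_single n h0
      _ = ENNReal.ofReal (H n) := Set.indicator_of_mem hx _
  have hGtop : ∀ x, Gf x ≠ ⊤ := by
    intro x
    by_cases hx : ∃ n, x ∈ A n
    · obtain ⟨n, hn⟩ := hx
      rw [hGval n x hn]; exact ENNReal.ofReal_ne_top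
    · push_neg at hx
      have : Gf x = 0 := by
        rw [show Gf x = ∑' (n : ℕ), (A n).indicator (fun _ => ENNReal.ofReal (H n)) x from rfl,
          ENNReal.tsum_eq_zero]
        exact fun n => Set.indicator_of_notMem (hx n) _
      rw [this]; exact ENNReal.zero_ne_top
  set f : X → ℝ := fun x => (Gf x).toReal - 1 with hfdef
  have hfmeas : Measurable f := hGmeas.ennreal_toReal.sub measurable_const
  have hflb : ∀ x, -1 ≤ f x := fun x => by
    have := ENNReal.toReal_nonneg (a := Gf x)
    simp only [hfdef]; linarith
  have hfA : ∀ m x, x ∈ A m → f x = H m - 1 := by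
    intro m x hx
    simp only [hfdef]
    rw [hGval m x hx, ENNReal.toReal_ofReal (by linarith [hH16 m])]
  -- integral computations
  have hhalf : ENNReal.ofReal (1/2 : ℝ) = 2⁻¹ := by
    rw [ENNReal.ofReal_div_of_pos (by norm_num)]
    norm_num
  have hGlint : ∫⁻ x, Gf x ∂μ = 1 := by
    rw [hGdef, lintegral_tsum
      (fun n => (measurable_const.indicator (hAmeas n)).aemeasurable)]
    have hterm : ∀ n, ∫⁻ x, (A n).indicator (fun _ => ENNReal.ofReal (H n)) x ∂μ
        = (2⁻¹ : ℝ≥0∞)^(n+1) := by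
      intro n
      rw [lintegral_indicator_const (hAmeas n), hAμ n,
        ← ENNReal.ofReal_mul (by linarith [hH16 n]), hHε n,
        ENNReal.ofReal_pow (by norm_num : (0:ℝ) ≤ 1/2), hhalf]
    simp_rw [hterm]
    rw [ENNReal.tsum_geometric_add_one, ENNReal.one_sub_inv_two]
    rw [inv_inv]
    exact ENNReal.inv_mul_cancel (by norm_num) ENNReal.ofNat_ne_top
  have hfpos_int : Integrable (fun x => (Gf x).toReal) μ :=
    integrable_toReal_of_lintegral_ne_top hGmeas.aemeasurable
      (by rw [hGlint]; exact ENNReal.one_ne_top)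
  have hfint : Integrable f μ := by
    have := hfpos_int.sub (integrable_const (1:ℝ))
    exact this
  have hfzero : ∫ x, f x ∂μ = 0 := by
    have h1 : ∫ x, f x ∂μ = (∫ x, (Gf x).toReal ∂μ) - ∫ _x, (1:ℝ) ∂μ := by
      simp only [hfdef]
      exact integral_sub hfpos_int (integrable_const 1)
    rw [h1, integral_toReal hGmeas.aemeasurable
      (ae_of_all _ fun x => lt_top_iff_ne_top.2 (hGtop x)), hGlint]
    simp
  refine ⟨f, hfmeas, hfint, hfzero, ?_⟩
  intro T hT hinv g hgm hfg
  obtain ⟨S, hSmeas, hSmp, hleft, hright⟩ := hinv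
  have hTmeas : Measurable T := hT.toMeasurePreserving.measurable
  set e : X ≃ᵐ X :=
    { toFun := T
      invFun := S
      left_inv := hleft
      right_inv := hright
      measurable_toFun := hTmeas
      measurable_invFun := hSmeas } with hedef
  have hemb : MeasurableEmbedding T := e.measurableEmbedding
  by_contra hne
  set I := ∫⁻ x, ENNReal.ofReal (φ |g x|) ∂μ with hIdef
  have key : ∀ m : ℕ, ENNReal.ofReal ((2:ℝ)^m/16) ≤ I := by
    intro m
    have hb := key_bound μ T hT.toMeasurePreserving hemb g f hgm (A m) (hAmeas m)
      (R m) (hR2 m) hflb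
      (fun x hx => by rw [hfA m x hx])
      hfg
    set E : Set X := {x | R m < |g x|} with hEdef
    have hEmeas : MeasurableSet E := measurableSet_lt measurable_const hgm.abs
    have hRpos : (0:ℝ) < R m := by linarith [hR2 m]
    have hmE0 : (0:ℝ) ≤ (μ E).toReal := ENNReal.toReal_nonneg
    have hεE : εr m ≤ 2/(3*(R m)) * (μ E).toReal := by
      rw [hAμ m] at hb
      have hrhs : (0:ℝ) ≤ 2/(3*(R m)) * (μ E).toReal := by positivity
      exact (ENNReal.ofReal_le_ofReal_iff hrhs).1 hb
    have hEμ : (1/2:ℝ)^(m+1)/8 ≤ (μ E).toReal := by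
      have hεval : εr m = (1/2)^(m+1) / (8 * R m) := by
        simp only [hεdef, hHdef]
      rw [hεval] at hεE
      have hq : 2/(3*(R m)) * (μ E).toReal = 2 * (μ E).toReal / (3 * R m) := by ring
      rw [hq, div_le_div_iff₀ (by linarith) (by linarith)] at hεE
      have h2 : (1/2:ℝ)^(m+1) * 3 * R m ≤ 2 * (μ E).toReal * 8 * R m := by nlinarith
      have h3 : (1/2:ℝ)^(m+1) * 3 ≤ 2 * (μ E).toReal * 8 :=
        le_of_mul_le_mul_right (by linarith) hRpos
      linarith
    have hφE : ∀ x ∈ E, ENNReal.ofReal ((4:ℝ)^m) ≤ ENNReal.ofReal (φ |g x|) := by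
      intro x hx
      apply ENNReal.ofReal_le_ofReal
      apply hrspec m
      have hx' : R m < |g x| := hx
      linarith [hrR m]
    have hμE : ENNReal.ofReal ((1/2:ℝ)^(m+1)/8) ≤ μ E := by
      calc ENNReal.ofReal ((1/2:ℝ)^(m+1)/8) ≤ ENNReal.ofReal ((μ E).toReal) :=
            ENNReal.ofReal_le_ofReal hEμ
        _ = μ E := ENNReal.ofReal_toReal (measure_ne_top μ _)
    calc ENNReal.ofReal ((2:ℝ)^m/16)
        = ENNReal.ofReal ((4:ℝ)^m) * ENNReal.ofReal ((1/2:ℝ)^(m+1)/8) := by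
          rw [← ENNReal.ofReal_mul (by positivity)]
          congr 1
          have h42 : (4:ℝ)^m * (1/2:ℝ)^(m+1) = 2^m/2 := by
            rw [pow_succ, ← mul_assoc, ← mul_pow]
            norm_num
            ring
          have h43 : (4:ℝ)^m * ((1/2:ℝ)^(m+1)/8) = (4^m * (1/2)^(m+1))/8 := by ring
          rw [h43, h42]
          ring
      _ ≤ ENNReal.ofReal ((4:ℝ)^m) * μ E := by gcongr
      _ = ∫⁻ _x in E, ENNReal.ofReal ((4:ℝ)^m) ∂μ := by rw [setLIntegral_const]
      _ ≤ ∫⁻ x in E, ENNReal.ofReal (φ |g x|) ∂μ :=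
          setLIntegral_mono (hφm.comp hgm.abs).ennreal_ofReal hφE
      _ ≤ I := by
          rw [hIdef]
          exact lintegral_mono' Measure.restrict_le_self le_rfl
  obtain ⟨n, hn⟩ := pow_unbounded_of_one_lt (16 * I.toReal) (by norm_num : (1:ℝ) < 2)
  have h1 : (2:ℝ)^n/16 ≤ I.toReal := by
    have := ENNReal.toReal_mono hne (key n)
    rwa [ENNReal.toReal_ofReal (by positivity)] at this
  have hItop : (0:ℝ) ≤ I.toReal := ENNReal.toReal_nonneg
  linarith
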